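/- Let (X, μ) be a measurable space with a probability measure, c_1, …, c_T a simplex coding in ℝ^{T−1}, T ≥ 2, ρ_1, …, ρ_T : X → [0,1] measurable with ∑_y ρ_y(x) = 1, D a measurable decoding map, f_ρ(x) = ∑_y ρ_y(x) c_y, R(g) = ∫ (1 − ρ_{g(x)}(x)) dμ, and E(f) = ∫ ∑_y ρ_y(x) ‖c_y − f(x)‖² dμ. Fix q > 0 and B_q > 0 and assume the multiclass noise condition: for all s ∈ [0,1], μ({x ∈ X : min_{j ≠ D(f_ρ(x))} ((T−1)/T) ⟨c_{D(f_ρ(x))} − c_j, f_ρ(x)⟩ ≤ s}) ≤ B_q s^q. Then for every measurable f : X → ℝ^{T−1} with ∫ ‖f‖² dμ < ∞: R(D∘f) − R(D∘f_ρ) ≤ K · ((2(T−1)/T)(E(f) − E(f_ρ)))^{(q+1)/(q+2)}, where K = (2 √(B_q + 1))^{(2q+2)/(q+2)}. -/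

import Mathlib

open scoped RealInnerProductSpace
open MeasureTheory

set_option maxHeartbeats 4000000

/-- improved comparison inequality for the simplex least squares loss under
the multiclass (Tsybakov-type) noise condition with parameters `q > 0`, `B_q > 0`:
if for all `s ∈ [0,1]`,
`μ {x : min_{j ≠ D(f_ρ x)} ((T-1)/T) ⟪c (D (f_ρ x)) - c j, f_ρ x⟫ ≤ s} ≤ B_q s^q`,
then every measurable square-integrable `f` satisfies
`R (D∘f) - R (D∘f_ρ) ≤ K ((2(T-1)/T)(E f - E f_ρ))^{(q+1)/(q+2)}` with
`K = (2 √(B_q + 1))^{(2q+2)/(q+2)}`. -/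
theorem simplex_ls_comparison_inequality_noise
    {X : Type*} [MeasurableSpace X] (μ : Measure X) [IsProbabilityMeasure μ]
    (T : ℕ) (hT : 2 ≤ T)
    (c : Fin T → EuclideanSpace ℝ (Fin (T - 1)))
    (hnorm : ∀ y, ‖c y‖ = 1)
    (hinner : ∀ y y', y ≠ y' → ⟪c y, c y'⟫ = -(1 / ((T : ℝ) - 1)))
    (hsum : ∑ y, c y = 0)
    (ρ : Fin T → X → ℝ) (hρmeas : ∀ y, Measurable (ρ y))
    (hρ0 : ∀ y x, 0 ≤ ρ y x) (hρ1 : ∀ y x, ρ y x ≤ 1)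
    (hρsum : ∀ x, ∑ y, ρ y x = 1)
    (D : EuclideanSpace ℝ (Fin (T - 1)) → Fin T) (hDmeas : Measurable D)
    (hD : ∀ α y, ⟪c y, α⟫ ≤ ⟪c (D α), α⟫)
    (fρ : X → EuclideanSpace ℝ (Fin (T - 1))) (hfρ : ∀ x, fρ x = ∑ y, ρ y x • c y)
    (R : (X → Fin T) → ℝ) (hR : ∀ g : X → Fin T, R g = ∫ x, (1 - ρ (g x) x) ∂μ)
    (E : (X → EuclideanSpace ℝ (Fin (T - 1))) → ℝ)
    (hE : ∀ f : X → EuclideanSpace ℝ (Fin (T - 1)),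
      E f = ∫ x, ∑ y, ρ y x * ‖c y - f x‖ ^ 2 ∂μ)
    (q Bq : ℝ) (hq : 0 < q) (hBq : 0 < Bq)
    (hnoise : ∀ s ∈ Set.Icc (0 : ℝ) 1,
      μ {x : X | (⨅ j : {j : Fin T // j ≠ D (fρ x)},
          ((T : ℝ) - 1) / T * ⟪c (D (fρ x)) - c (j : Fin T), fρ x⟫) ≤ s}
        ≤ ENNReal.ofReal (Bq * s ^ q))
    (f : X → EuclideanSpace ℝ (Fin (T - 1))) (hfmeas : Measurable f)
    (hfint : Integrable (fun x => ‖f x‖ ^ 2) μ) :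
    R (D ∘ f) - R (D ∘ fρ) ≤
      (2 * Real.sqrt (Bq + 1)) ^ ((2 * q + 2) / (q + 2)) *
        ((2 * ((T : ℝ) - 1) / T) * (E f - E fρ)) ^ ((q + 1) / (q + 2)) := by
  classical
  have hT2 : (2 : ℝ) ≤ (T : ℝ) := by exact_mod_cast hT
  have hT0 : (0 : ℝ) < (T : ℝ) := by linarith
  have hT1 : (0 : ℝ) < (T : ℝ) - 1 := by linarith
  set κ : ℝ := ((T : ℝ) - 1) / T with hκdef
  have hκ0 : 0 < κ := div_pos hT1 hT0
  -- the inner-product formula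
  have hform : ∀ (y : Fin T) (x : X),
      ⟪c y, fρ x⟫ = ((T : ℝ) * ρ y x - 1) / ((T : ℝ) - 1) := by
    intro y x
    rw [hfρ, inner_sum]
    have hz : ∀ y' : Fin T, ⟪c y, ρ y' x • c y'⟫ = ρ y' x * ⟪c y, c y'⟫ := fun y' =>
      real_inner_smul_right _ _ _
    simp_rw [hz]
    rw [← Finset.sum_erase_add _ _ (Finset.mem_univ y)]
    have h1 : ∀ y' ∈ Finset.univ.erase y,
        ρ y' x * ⟪c y, c y'⟫ = ρ y' x * (-(1 / ((T : ℝ) - 1))) := by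
      intro y' hy'
      rw [hinner y y' (Ne.symm (Finset.ne_of_mem_erase hy'))]
    rw [Finset.sum_congr rfl h1, ← Finset.sum_mul,
      Finset.sum_erase_eq_sub (Finset.mem_univ y), hρsum]
    have h2 : ⟪c y, c y⟫ = 1 := by
      rw [real_inner_self_eq_norm_sq, hnorm, one_pow]
    rw [h2]
    field_simp
    ring
  have hdiff : ∀ (y y' : Fin T) (x : X),
      κ * ⟪c y - c y', fρ x⟫ = ρ y x - ρ y' x := by
    intro y y' x
    rw [inner_sub_left, hform, hform, hκdef]
    field_simp
    ring
  -- Δ : pointwise excess misclassification risk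
  set Δ : X → ℝ := fun x => ρ (D (fρ x)) x - ρ (D (f x)) x with hΔdef
  have hΔeq : ∀ x, Δ x = κ * ⟪c (D (fρ x)) - c (D (f x)), fρ x⟫ := fun x =>
    (hdiff _ _ x).symm
  have hΔ0 : ∀ x, 0 ≤ Δ x := by
    intro x
    have h := hD (fρ x) (D (f x))
    rw [hform, hform] at h
    have h2 : (T:ℝ) * ρ (D (f x)) x - 1 ≤ (T:ℝ) * ρ (D (fρ x)) x - 1 :=
      (div_le_div_iff_of_pos_right hT1).mp h
    have h3 : ρ (D (f x)) x ≤ ρ (D (fρ x)) x :=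
      (mul_le_mul_iff_right₀ hT0).mp (by linarith)
    simp only [hΔdef]
    linarith
  have hΔ1 : ∀ x, Δ x ≤ 1 := by
    intro x
    have h1 := hρ1 (D (fρ x)) x
    have h2 := hρ0 (D (f x)) x
    simp only [hΔdef]
    linarith
  -- norm of difference of code vectors
  have hnd : ∀ y y' : Fin T, ‖c y - c y'‖ ≤ Real.sqrt (2 * T / ((T : ℝ) - 1)) := by
    intro y y'
    rw [show ‖c y - c y'‖ = Real.sqrt (‖c y - c y'‖ ^ 2) from
      (Real.sqrt_sq (norm_nonneg _)).symm]
    apply Real.sqrt_le_sqrt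
    rcases eq_or_ne y y' with rfl | hyy
    · have h0 : (0:ℝ) ≤ 2 * T / ((T:ℝ) - 1) := div_nonneg (by positivity) hT1.le
      simpa using h0
    · rw [norm_sub_sq_real, hnorm, hnorm, hinner y y' hyy]
      rw [show (1:ℝ)^2 - 2 * (-(1/((T:ℝ)-1))) + 1^2 = 2*T/((T:ℝ)-1) by
        field_simp; ring]
  -- key upper bound: Δ x ≤ √(2κ) ‖f x - fρ x‖
  have hC : ∀ x, Δ x ≤ Real.sqrt (2 * κ) * ‖f x - fρ x‖ := by
    intro x
    have e1 : ⟪c (D (fρ x)) - c (D (f x)), fρ x⟫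
        = ⟪c (D (fρ x)) - c (D (f x)), fρ x - f x⟫
          + ⟪c (D (fρ x)) - c (D (f x)), f x⟫ := by
      rw [← inner_add_right]
      congr 1
      abel
    have e2 : ⟪c (D (fρ x)) - c (D (f x)), f x⟫ ≤ 0 := by
      rw [inner_sub_left]
      have := hD (f x) (D (fρ x))
      linarith
    have e3 : ⟪c (D (fρ x)) - c (D (f x)), fρ x - f x⟫
        ≤ Real.sqrt (2 * T / ((T : ℝ) - 1)) * ‖f x - fρ x‖ := by
      calc ⟪c (D (fρ x)) - c (D (f x)), fρ x - f x⟫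
          ≤ ‖c (D (fρ x)) - c (D (f x))‖ * ‖fρ x - f x‖ := real_inner_le_norm _ _
        _ ≤ Real.sqrt (2 * T / ((T : ℝ) - 1)) * ‖f x - fρ x‖ := by
            rw [norm_sub_rev (fρ x)]
            exact mul_le_mul_of_nonneg_right (hnd _ _) (norm_nonneg _)
    have e4 : κ * Real.sqrt (2 * T / ((T : ℝ) - 1)) = Real.sqrt (2 * κ) := by
      rw [show (2 : ℝ) * κ = κ ^ 2 * (2 * T / ((T : ℝ) - 1)) by
          rw [hκdef]; field_simp]
      rw [Real.sqrt_mul (sq_nonneg κ), Real.sqrt_sq hκ0.le]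
    calc Δ x = κ * ⟪c (D (fρ x)) - c (D (f x)), fρ x⟫ := hΔeq x
      _ ≤ κ * ⟪c (D (fρ x)) - c (D (f x)), fρ x - f x⟫ := by
          rw [e1]; nlinarith
      _ ≤ κ * (Real.sqrt (2 * T / ((T : ℝ) - 1)) * ‖f x - fρ x‖) :=
          mul_le_mul_of_nonneg_left e3 hκ0.le
      _ = Real.sqrt (2 * κ) * ‖f x - fρ x‖ := by rw [← mul_assoc, e4]
  have hCsq : ∀ x, Δ x ^ 2 ≤ 2 * κ * ‖f x - fρ x‖ ^ 2 := by
    intro x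
    have h1 := hC x
    have h2 := hΔ0 x
    have h3 : Real.sqrt (2 * κ) ^ 2 = 2 * κ := Real.sq_sqrt (by positivity)
    nlinarith [Real.sqrt_nonneg (2 * κ), norm_nonneg (f x - fρ x)]
  -- measurability
  have hfρeq : fρ = fun x => ∑ y, ρ y x • c y := funext hfρ
  have hfρmeas : Measurable fρ := by
    rw [hfρeq]
    exact Finset.measurable_sum _ fun y _ => (hρmeas y).smul_const (c y)
  have hcomp : ∀ {g : X → Fin T}, Measurable g → Measurable fun x => ρ (g x) x := by
    intro g hg
    have heq : (fun x => ρ (g x) x) = fun x => ∑ y, if g x = y then ρ y x else 0 := by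
      funext x
      simp
    rw [heq]
    refine Finset.measurable_sum _ fun y _ => Measurable.ite ?_ (hρmeas y) measurable_const
    exact hg (measurableSet_singleton y)
  have hΔmeas : Measurable Δ :=
    (hcomp (hDmeas.comp hfρmeas)).sub (hcomp (hDmeas.comp hfmeas))
  -- the margin function
  set m : X → ℝ := fun x => ⨅ j : {j : Fin T // j ≠ D (fρ x)},
      κ * ⟪c (D (fρ x)) - c (j : Fin T), fρ x⟫ with hmdef
  have hmmeas : Measurable m := by
    have hF : Measurable fun α : EuclideanSpace ℝ (Fin (T - 1)) =>
        ⨅ j : {j : Fin T // j ≠ D α}, κ * ⟪c (D α) - c (j : Fin T), α⟫ := by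
      have heq : (fun α : EuclideanSpace ℝ (Fin (T - 1)) =>
          ⨅ j : {j : Fin T // j ≠ D α}, κ * ⟪c (D α) - c (j : Fin T), α⟫)
          = fun α => ∑ y, if D α = y then
              (⨅ j : {j : Fin T // j ≠ y}, κ * ⟪c y - c (j : Fin T), α⟫) else 0 := by
        funext α
        rw [Finset.sum_ite_eq Finset.univ (D α), if_pos (Finset.mem_univ _)]
      rw [heq]
      refine Finset.measurable_sum _ fun y _ => Measurable.ite ?_ ?_ measurable_const
      · exact hDmeas (measurableSet_singleton y)
      · exact Measurable.iInf fun j =>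
          (measurable_const.inner measurable_id).const_mul κ
    exact hF.comp hfρmeas
  have hmle : ∀ x, D (f x) ≠ D (fρ x) → m x ≤ Δ x := by
    intro x hne
    rw [hΔeq x]
    exact ciInf_le
      (Finite.bddBelow_range fun j : {j : Fin T // j ≠ D (fρ x)} =>
        κ * ⟪c (D (fρ x)) - c (j : Fin T), fρ x⟫)
      (⟨D (f x), hne⟩ : {j : Fin T // j ≠ D (fρ x)})
  -- integrability
  have hbd : ∀ {u : X → ℝ}, Measurable u → (∀ x, |u x| ≤ 1) → Integrable u μ := by
    intro u hu hub
    refine Integrable.mono' (integrable_const 1) hu.aestronglyMeasurable ?_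
    exact Filter.Eventually.of_forall fun x => by simpa using hub x
  have hΔint : Integrable Δ μ := hbd hΔmeas fun x => by
    rw [abs_le]; exact ⟨by linarith [hΔ0 x], hΔ1 x⟩
  have hfρnorm : ∀ x, ‖fρ x‖ ≤ 1 := by
    intro x
    rw [hfρ]
    calc ‖∑ y, ρ y x • c y‖ ≤ ∑ y, ‖ρ y x • c y‖ := norm_sum_le _ _
      _ = ∑ y, ρ y x := by
          refine Finset.sum_congr rfl fun y _ => ?_
          rw [norm_smul, hnorm, mul_one, Real.norm_eq_abs, abs_of_nonneg (hρ0 y x)]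
      _ = 1 := hρsum x
  set g : X → ℝ := fun x => ‖f x - fρ x‖ ^ 2 with hgdef
  have hgmeas : Measurable g := (hfmeas.sub hfρmeas).norm.pow_const 2
  have hgnn : ∀ x, 0 ≤ g x := fun x => by positivity
  have hgint : Integrable g μ := by
    refine Integrable.mono' ((hfint.const_mul 2).add (integrable_const 2))
      hgmeas.aestronglyMeasurable (Filter.Eventually.of_forall fun x => ?_)
    have h1 : ‖f x - fρ x‖ ≤ ‖f x‖ + 1 := by
      calc ‖f x - fρ x‖ ≤ ‖f x‖ + ‖fρ x‖ := norm_sub_le _ _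
        _ ≤ ‖f x‖ + 1 := by linarith [hfρnorm x]
    rw [Real.norm_eq_abs, abs_of_nonneg (hgnn x)]
    simp only [hgdef, Pi.add_apply]
    nlinarith [norm_nonneg (f x), norm_nonneg (f x - fρ x),
      mul_self_le_mul_self (norm_nonneg (f x - fρ x)) h1, sq_nonneg (‖f x‖ - 1)]
  -- the excess SLS risk identity
  have hinnersum : ∀ (x : X) (v : EuclideanSpace ℝ (Fin (T - 1))),
      ∑ y, ρ y x * ⟪c y, v⟫ = ⟪fρ x, v⟫ := by
    intro x v
    rw [hfρ, sum_inner]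
    exact Finset.sum_congr rfl fun y _ => (real_inner_smul_left _ _ _).symm
  have hexp : ∀ (x : X) (v : EuclideanSpace ℝ (Fin (T - 1))),
      ∑ y, ρ y x * ‖c y - v‖ ^ 2 = 1 - 2 * ⟪fρ x, v⟫ + ‖v‖ ^ 2 := by
    intro x v
    have h1 : ∀ y : Fin T, ρ y x * ‖c y - v‖ ^ 2
        = ρ y x - 2 * (ρ y x * ⟪c y, v⟫) + ρ y x * ‖v‖ ^ 2 := by
      intro y
      rw [norm_sub_sq_real, hnorm, one_pow]
      ring
    rw [Finset.sum_congr rfl fun y _ => h1 y]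
    rw [Finset.sum_add_distrib, Finset.sum_sub_distrib, ← Finset.mul_sum,
      ← Finset.sum_mul, hρsum, hinnersum]
    ring
  set h : X → ℝ := fun x => 1 - ‖fρ x‖ ^ 2 with hhdef
  have hhint : Integrable h μ := by
    refine hbd (measurable_const.sub (hfρmeas.norm.pow_const 2)) fun x => ?_
    have hx : h x = 1 - ‖fρ x‖ ^ 2 := rfl
    rw [hx, abs_le]
    have h1 := hfρnorm x
    have h2 := norm_nonneg (fρ x)
    constructor <;> nlinarith
  have hEf : (fun x => ∑ y, ρ y x * ‖c y - f x‖ ^ 2) = fun x => g x + h x := by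
    funext x
    rw [hexp x (f x)]
    have h2 : ‖f x - fρ x‖ ^ 2 = ‖f x‖ ^ 2 - 2 * ⟪f x, fρ x⟫ + ‖fρ x‖ ^ 2 :=
      norm_sub_sq_real _ _
    have h3 : ⟪fρ x, f x⟫ = ⟪f x, fρ x⟫ := real_inner_comm _ _
    simp only [hgdef, hhdef]
    rw [h2, h3]
    ring
  have hEfρ : (fun x => ∑ y, ρ y x * ‖c y - fρ x‖ ^ 2) = h := by
    funext x
    rw [hexp x (fρ x), real_inner_self_eq_norm_sq]
    simp only [hhdef]
    ring
  have hEdiff : E f - E fρ = ∫ x, g x ∂μ := by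
    rw [hE f, hE fρ, hEf, hEfρ, integral_add hgint hhint]
    ring
  -- the excess misclassification risk identity
  have hRdiff : R (D ∘ f) - R (D ∘ fρ) = ∫ x, Δ x ∂μ := by
    rw [hR (D ∘ f), hR (D ∘ fρ)]
    have hint1 : Integrable (fun x => (1 : ℝ) - ρ (D (f x)) x) μ := by
      refine hbd (measurable_const.sub (hcomp (hDmeas.comp hfmeas))) fun x => ?_
      rw [abs_le]
      exact ⟨by linarith [hρ1 (D (f x)) x], by linarith [hρ0 (D (f x)) x]⟩
    have hint2 : Integrable (fun x => (1 : ℝ) - ρ (D (fρ x)) x) μ := by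
      refine hbd (measurable_const.sub (hcomp (hDmeas.comp hfρmeas))) fun x => ?_
      rw [abs_le]
      exact ⟨by linarith [hρ1 (D (fρ x)) x], by linarith [hρ0 (D (fρ x)) x]⟩
    rw [show (fun x => (1 : ℝ) - ρ ((D ∘ f) x) x) = fun x => (1 : ℝ) - ρ (D (f x)) x from rfl,
      show (fun x => (1 : ℝ) - ρ ((D ∘ fρ) x) x) = fun x => (1 : ℝ) - ρ (D (fρ x)) x from rfl,
      ← integral_sub hint1 hint2]
    congr 1
    funext x
    simp only [hΔdef]
    ring
  -- rewrite the goal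
  set I : ℝ := ∫ x, g x ∂μ with hIdef
  have hI0 : 0 ≤ I := integral_nonneg hgnn
  have hEq : (2 * ((T : ℝ) - 1) / T) * (E f - E fρ) = 2 * κ * I := by
    rw [hEdiff, hκdef]
    ring
  rw [hRdiff, hEq]
  set K : ℝ := (2 * Real.sqrt (Bq + 1)) ^ ((2 * q + 2) / (q + 2)) with hKdef
  have hq2 : (0 : ℝ) < q + 2 := by linarith
  have hexpos : 0 < (q + 1) / (q + 2) := by positivity
  have hsqrtB1 : (1 : ℝ) ≤ Real.sqrt (Bq + 1) := by
    have h1 := Real.sqrt_le_sqrt (show (1 : ℝ) ≤ Bq + 1 by linarith)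
    rwa [Real.sqrt_one] at h1
  have hK1 : (1 : ℝ) ≤ K := Real.one_le_rpow (by linarith) (by positivity)
  rcases eq_or_lt_of_le hI0 with hIzero | hIpos
  · -- degenerate case I = 0
    have hgz : g =ᵐ[μ] 0 := (integral_eq_zero_iff_of_nonneg hgnn hgint).mp hIzero.symm
    have hΔz : ∀ᵐ x ∂μ, Δ x ≤ 0 := by
      filter_upwards [hgz] with x hx
      have h1 : ‖f x - fρ x‖ ^ 2 = 0 := hx
      have h2 : ‖f x - fρ x‖ = 0 := by nlinarith [norm_nonneg (f x - fρ x)]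
      have h3 := hC x
      rw [h2, mul_zero] at h3
      exact h3
    have h1 : ∫ x, Δ x ∂μ ≤ 0 := integral_nonpos_of_ae hΔz
    have h2 : (2 * κ * I) ^ ((q + 1) / (q + 2)) = 0 := by
      rw [← hIzero, mul_zero, Real.zero_rpow (ne_of_gt hexpos)]
    rw [h2, mul_zero]
    exact h1
  · -- main case 0 < I
    set b : ℝ := 2 * κ * I with hbdef
    have hb0 : 0 < b := by positivity
    rcases le_or_gt 1 b with hb1 | hb1
    · -- trivial case b ≥ 1
      have h1 : ∫ x, Δ x ∂μ ≤ 1 := by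
        calc ∫ x, Δ x ∂μ ≤ ∫ _x, (1 : ℝ) ∂μ := integral_mono hΔint (integrable_const 1) hΔ1
          _ = 1 := by simp
      have h2 : (1 : ℝ) ≤ b ^ ((q + 1) / (q + 2)) := Real.one_le_rpow hb1 hexpos.le
      calc ∫ x, Δ x ∂μ ≤ 1 := h1
        _ ≤ K * b ^ ((q + 1) / (q + 2)) := by nlinarith
    · -- main case 0 < b < 1
      set t : ℝ := b ^ ((1 : ℝ) / (q + 2)) with htdef
      have ht0 : 0 < t := Real.rpow_pos_of_pos hb0 _
      have ht1 : t ≤ 1 := Real.rpow_le_one hb0.le hb1.le (by positivity)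
      have hsB : 0 < Real.sqrt Bq := Real.sqrt_pos.mpr hBq
      set ε : ℝ := t / Real.sqrt Bq with hεdef
      have hε0 : 0 < ε := div_pos ht0 hsB
      set A : Set X := {x | m x ≤ t} with hAdef
      have hA : MeasurableSet A := measurableSet_le hmmeas measurable_const
      set C : ℝ := (1 / t + 1 / (2 * ε)) * (2 * κ) with hCdef
      have hC0 : 0 < C := by positivity
      -- the pointwise bound
      have hpt : ∀ x, Δ x ≤ C * g x + A.indicator (fun _ => ε / 2) x := by
        intro x
        have hind0 : 0 ≤ A.indicator (fun _ => ε / 2) x :=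
          Set.indicator_nonneg (fun _ _ => by positivity) x
        have hCg0 : 0 ≤ C * g x := mul_nonneg hC0.le (hgnn x)
        by_cases hxy : D (f x) = D (fρ x)
        · have hz : Δ x = 0 := by simp [hΔdef, hxy]
          rw [hz]
          positivity
        · by_cases hmt : m x ≤ t
          · -- small-margin regime
            have hxA : x ∈ A := hmt
            rw [Set.indicator_of_mem hxA]
            have h2 : Δ x ≤ Real.sqrt (2 * κ * g x) := by
              have he : Real.sqrt (2 * κ * g x)
                  = Real.sqrt (2 * κ) * ‖f x - fρ x‖ := by
                rw [hgdef]
                rw [Real.sqrt_mul (by positivity : (0:ℝ) ≤ 2 * κ),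
                  Real.sqrt_sq (norm_nonneg _)]
              rw [he]
              exact hC x
            have h3 : Real.sqrt (2 * κ * g x) ≤ (2 * κ * g x) / (2 * ε) + ε / 2 := by
              set s : ℝ := Real.sqrt (2 * κ * g x) with hsdef
              have hs2 : s ^ 2 = 2 * κ * g x := Real.sq_sqrt (by positivity)
              have hs0 : 0 ≤ s := Real.sqrt_nonneg _
              have h6 : s * (2 * ε) ≤ (2 * κ * g x) + ε * ε := by
                nlinarith [sq_nonneg (s - ε)]
              calc s = (s * (2 * ε)) / (2 * ε) := by field_simp
                _ ≤ ((2 * κ * g x) + ε * ε) / (2 * ε) :=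
                  (div_le_div_iff_of_pos_right (by positivity)).mpr h6
                _ = (2 * κ * g x) / (2 * ε) + ε / 2 := by
                  field_simp
            have h4 : (2 * κ * g x) / (2 * ε) ≤ C * g x := by
              rw [hCdef]
              have h5 : 0 ≤ 1 / t * (2 * κ) * g x := by positivity
              rw [show (2 * κ * g x) / (2 * ε) = 1 / (2 * ε) * (2 * κ) * g x by ring]
              nlinarith
            exact h2.trans (h3.trans (add_le_add_left h4 (ε / 2)))
          · -- large-margin regime
            push_neg at hmt
            have htΔ : t < Δ x := lt_of_lt_of_le hmt (hmle x hxy)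
            have h2 : Δ x ≤ Δ x ^ 2 / t := by
              rw [le_div_iff₀ ht0]
              nlinarith [hΔ0 x]
            have h3 : Δ x ^ 2 / t ≤ (2 * κ * g x) / t := by
              apply (div_le_div_iff_of_pos_right ht0).mpr
              rw [hgdef]
              exact hCsq x
            have h4 : (2 * κ * g x) / t ≤ C * g x := by
              rw [hCdef]
              have h5 : 0 ≤ 1 / (2 * ε) * (2 * κ) * g x := by positivity
              rw [show (2 * κ * g x) / t = 1 / t * (2 * κ) * g x by ring]
              nlinarith
            linarith
      -- integrate the pointwise bound
      have hIind : Integrable (fun x => A.indicator (fun _ => ε / 2) x) μ :=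
        (integrable_const (ε / 2)).indicator hA
      have hμA : (μ A).toReal ≤ Bq * t ^ q := by
        have h1 : μ A ≤ ENNReal.ofReal (Bq * t ^ q) := hnoise t ⟨ht0.le, ht1⟩
        have h2 : (μ A).toReal ≤ (ENNReal.ofReal (Bq * t ^ q)).toReal :=
          ENNReal.toReal_mono ENNReal.ofReal_ne_top h1
        rwa [ENNReal.toReal_ofReal (by positivity)] at h2
      have hkey : ∫ x, Δ x ∂μ ≤ C * I + ε / 2 * (Bq * t ^ q) := by
        have hμA0 : 0 ≤ (μ A).toReal := ENNReal.toReal_nonneg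
        calc ∫ x, Δ x ∂μ ≤ ∫ x, (C * g x + A.indicator (fun _ => ε / 2) x) ∂μ :=
              integral_mono hΔint ((hgint.const_mul C).add hIind) hpt
          _ = C * I + (μ A).toReal * (ε / 2) := by
              rw [integral_add (hgint.const_mul C) hIind, integral_const_mul C,
                integral_indicator_const _ hA, smul_eq_mul, hIdef, measureReal_def]
          _ ≤ C * I + ε / 2 * (Bq * t ^ q) := by nlinarith
      -- arithmetic with the optimal threshold
      have htq2 : t ^ (q + 2) = b := by
        rw [htdef, ← Real.rpow_mul hb0.le,
          show (1 / (q + 2)) * (q + 2) = 1 by field_simp, Real.rpow_one]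
      have htq1 : t ^ (q + 1) = b ^ ((q + 1) / (q + 2)) := by
        rw [htdef, ← Real.rpow_mul hb0.le]
        congr 1
        field_simp
      have hCI : C * I = (1 / t + 1 / (2 * ε)) * b := by
        rw [hCdef, hbdef]
        ring
      have h2 : t ^ (q + 1) = t ^ q * t := by
        rw [Real.rpow_add ht0, Real.rpow_one]
      have h3 : b = t ^ q * t * t := by
        rw [← htq2, show q + 2 = q + 1 + 1 by ring, Real.rpow_add ht0, Real.rpow_one, h2]
      have harith : (1 / t + 1 / (2 * ε)) * b + ε / 2 * (Bq * t ^ q)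
          = (1 + Real.sqrt Bq) * t ^ (q + 1) := by
        have hs : Real.sqrt Bq * Real.sqrt Bq = Bq := Real.mul_self_sqrt hBq.le
        rw [hεdef, h2, h3]
        rw [div_add_div _ _ (by positivity : t ≠ 0) (by positivity : 2 * (t / Real.sqrt Bq) ≠ 0)]
        generalize hgen : Real.sqrt Bq = s at hs hsB ⊢
        rw [← hs]
        field_simp
        ring
      have hK2 : 1 + Real.sqrt Bq ≤ K := by
        have ha : Real.sqrt Bq ≤ Real.sqrt (Bq + 1) := Real.sqrt_le_sqrt (by linarith)
        calc 1 + Real.sqrt Bq ≤ 2 * Real.sqrt (Bq + 1) := by linarith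
          _ = (2 * Real.sqrt (Bq + 1)) ^ (1 : ℝ) := (Real.rpow_one _).symm
          _ ≤ K := by
              rw [hKdef]
              refine Real.rpow_le_rpow_of_exponent_le (by linarith) ?_
              rw [le_div_iff₀ hq2]
              linarith
      calc ∫ x, Δ x ∂μ ≤ C * I + ε / 2 * (Bq * t ^ q) := hkey
        _ = (1 / t + 1 / (2 * ε)) * b + ε / 2 * (Bq * t ^ q) := by rw [hCI]
        _ = (1 + Real.sqrt Bq) * t ^ (q + 1) := harith
        _ ≤ K * t ^ (q + 1) :=
            mul_le_mul_of_nonneg_right hK2 (Real.rpow_pos_of_pos ht0 _).le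
        _ = K * b ^ ((q + 1) / (q + 2)) := by rw [htq1]
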